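/- Every nilpotent matrix N ∈ M₂(ℤ) is similar over ℤ to an integer multiple of E₁₂, i.e., there exist U ∈ GL₂(ℤ) and c ∈ ℤ such that U·N·U⁻¹ = c·E₁₂. -/

import Mathlib

theorem nilpotent_similar_multiple_of_e12 (N : Matrix (Fin 2) (Fin 2) ℤ)
    (hN : IsNilpotent N) :
    ∃ (U : (Matrix (Fin 2) (Fin 2) ℤ)ˣ) (c : ℤ),
      (U : Matrix (Fin 2) (Fin 2) ℤ) * N * (↑U⁻¹ : Matrix (Fin 2) (Fin 2) ℤ)
        = c • (!![0, 1; 0, 0] : Matrix (Fin 2) (Fin 2) ℤ) := by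
  -- Step 1: N ^ 2 = 0
  have hcp : N.charpoly = Polynomial.X ^ 2 := by
    have h := Matrix.isNilpotent_charpoly_sub_pow_of_isNilpotent hN
    rw [Fintype.card_fin] at h
    have h0 := h.eq_zero
    rwa [sub_eq_zero] at h0
  have h2 : N ^ 2 = 0 := by
    have h := N.aeval_self_charpoly
    rw [hcp] at h
    simpa using h
  set a := N 0 0 with ha
  set b := N 0 1 with hb
  set c := N 1 0 with hc
  set d := N 1 1 with hd
  have hNeta : N = !![a, b; c, d] := Matrix.etaExpand_eq N |>.symm
  rw [hNeta, pow_two] at h2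
  have e1 : a * a + b * c = 0 := by
    have := congrFun (congrFun h2 0) 0; simpa [Matrix.mul_apply, Fin.sum_univ_two] using this
  have e2 : a * b + b * d = 0 := by
    have := congrFun (congrFun h2 0) 1; simpa [Matrix.mul_apply, Fin.sum_univ_two] using this
  have e3 : c * a + d * c = 0 := by
    have := congrFun (congrFun h2 1) 0; simpa [Matrix.mul_apply, Fin.sum_univ_two, mul_comm] using this
  have e4 : c * b + d * d = 0 := by
    have := congrFun (congrFun h2 1) 1; simpa [Matrix.mul_apply, Fin.sum_univ_two, mul_comm] using this
  -- Step 2: trace is zero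
  have htr : d = -a := by
    by_contra hne
    have ht : a + d ≠ 0 := fun h => hne (by linarith [h])
    have hb0 : b = 0 := by
      rcases mul_eq_zero.mp (show b * (a + d) = 0 by ring_nf; linarith [e2]) with h | h
      · exact h
      · exact absurd h ht
    have hc0 : c = 0 := by
      rcases mul_eq_zero.mp (show c * (a + d) = 0 by ring_nf; linarith [e3]) with h | h
      · exact h
      · exact absurd h ht
    have ha0 : a = 0 := by
      have : a * a = 0 := by rw [hb0] at e1; linarith [e1]
      exact mul_self_eq_zero.mp this
    have hd0 : d = 0 := by
      have : d * d = 0 := by rw [hc0] at e4; linarith [e4]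
      exact mul_self_eq_zero.mp this
    exact ht (by rw [ha0, hd0]; ring)
  by_cases hac : a = 0 ∧ c = 0
  · -- N is already b • E₁₂
    refine ⟨1, b, ?_⟩
    rw [hNeta, hac.1, hac.2, htr, hac.1]
    ext i j
    fin_cases i <;> fin_cases j <;> simp
  · -- a, c not both zero
    have hg0 : (Int.gcd a c : ℤ) ≠ 0 := by
      simp only [ne_eq, Int.natCast_eq_zero, Int.gcd_eq_zero_iff]
      exact hac
    set G : ℤ := (Int.gcd a c : ℤ) with hG
    set p : ℤ := a / G with hp
    set q : ℤ := c / G with hq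
    have hpa : a = G * p := (Int.ediv_mul_cancel (Int.gcd_dvd_left a c)).symm.trans (mul_comm _ _)
    have hqc : c = G * q := (Int.ediv_mul_cancel (Int.gcd_dvd_right a c)).symm.trans (mul_comm _ _)
    have hcop : Int.gcd p q = 1 := by
      apply Int.gcd_div_gcd_div_gcd
      exact Nat.pos_of_ne_zero fun h => hg0 (by rw [hG, h]; rfl)
    -- Bezout
    obtain ⟨x, y, hxy⟩ : ∃ x y : ℤ, p * x + q * y = 1 := by
      refine ⟨Int.gcdA p q, Int.gcdB p q, ?_⟩
      have := Int.gcd_eq_gcd_ab p q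
      rw [hcop] at this
      push_cast at this
      linarith [this]
    -- kernel relations
    have hap : a * p + b * q = 0 := by
      apply mul_left_cancel₀ hg0
      calc G * (a * p + b * q) = a * (G * p) + b * (G * q) := by ring
        _ = a * a + b * c := by rw [← hpa, ← hqc]
        _ = 0 := e1
        _ = G * 0 := by ring
    have hcp2 : c * p + d * q = 0 := by
      apply mul_left_cancel₀ hg0
      calc G * (c * p + d * q) = c * (G * p) + d * (G * q) := by ring
        _ = c * a + d * c := by rw [← hpa, ← hqc]
        _ = 0 := e3
        _ = G * 0 := by ring
    set A : Matrix (Fin 2) (Fin 2) ℤ := !![x, y; -q, p] with hA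
    set B : Matrix (Fin 2) (Fin 2) ℤ := !![p, -y; q, x] with hB
    have hAB : A * B = 1 := by
      ext i j
      fin_cases i <;> fin_cases j <;>
        simp [hA, hB, Matrix.mul_apply, Fin.sum_univ_two] <;> linarith [hxy]
    have hBA : B * A = 1 := by
      ext i j
      fin_cases i <;> fin_cases j <;>
        simp [hA, hB, Matrix.mul_apply, Fin.sum_univ_two] <;> linarith [hxy]
    have h11 : x * a + y * c = x * a + y * c := rfl
    have g11 : (x * a + y * c) * p + (x * b + y * d) * q = 0 := by
      linear_combination x * hap + y * hcp2
    have g21 : (-q * a + p * c) * p + (-q * b + p * d) * q = 0 := by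
      linear_combination (-q) * hap + p * hcp2
    have g22 : (-q * a + p * c) * -y + (-q * b + p * d) * x = 0 := by
      linear_combination y * q * hpa - y * p * hqc + x * p * htr - x * hap
    refine ⟨⟨A, B, hAB, hBA⟩, (x * a + y * c) * -y + (x * b + y * d) * x, ?_⟩
    have hUinv : (↑(⟨A, B, hAB, hBA⟩ : (Matrix (Fin 2) (Fin 2) ℤ)ˣ)⁻¹
        : Matrix (Fin 2) (Fin 2) ℤ) = B := rfl
    rw [hUinv, hNeta]
    show !![x, y; -q, p] * !![a, b; c, d] * !![p, -y; q, x] = _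
    rw [Matrix.mul_fin_two, Matrix.mul_fin_two, g11, g21, g22]
    ext i j
    fin_cases i <;> fin_cases j <;> simp
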